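/- Let (S, 𝓕) be a measurable space, let P be a probability measure on it, let 𝒬 be a nonempty set of probability measures on (S,𝓕) each absolutely continuous with respect to P, let g : S → ℝ be bounded and measurable, and let β > 0. Define, for γ > β, h(γ) = f(γ/(γ−β))/(γ−β) + (1/γ)·log ∫ e^{γ g} dP, where f(α) = sup{ R_α(Q‖P) : Q ∈ 𝒬 }. Then the function γ̃ ↦ h(1/γ̃) is convex on the interval (0, 1/β); that is, h(γ) is convex as a function of 1/γ. -/

import Mathlib

open MeasureTheory Classical

section Helpers

variable {S : Type*} [MeasurableSpace S]

lemma scal_aux (a b : ℝ) (x : EReal) :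
    (a : EReal) * ((b : EReal) * x) = ((a * b : ℝ) : EReal) * x := by
  rw [EReal.coe_mul, mul_assoc]

/-- Hölder inequality in the exponent for lintegrals. -/
lemma lintegral_rpow_inv_holder (P : Measure S) (f : S → ENNReal) (hf : Measurable f)
    {s₁ s₂ l : ℝ} (hs₁ : 0 < s₁) (hs₂ : 0 < s₂) (hl : 0 < l) (hl1 : l < 1) :
    ∫⁻ x, f x ^ (l * s₁ + (1 - l) * s₂)⁻¹ ∂P ≤
      (∫⁻ x, f x ^ s₁⁻¹ ∂P) ^ (l * s₁ / (l * s₁ + (1 - l) * s₂)) *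
      (∫⁻ x, f x ^ s₂⁻¹ ∂P) ^ ((1 - l) * s₂ / (l * s₁ + (1 - l) * s₂)) := by
  have hl1' : 0 < 1 - l := by linarith
  set s₃ := l * s₁ + (1 - l) * s₂ with hs₃def
  have hs₃ : 0 < s₃ := by positivity
  have hpq : Real.HolderConjugate (s₃ / (l * s₁)) (s₃ / ((1 - l) * s₂)) := by
    rw [Real.holderConjugate_iff]
    constructor
    · rw [lt_div_iff₀ (by positivity)]; nlinarith
    · rw [inv_div, inv_div, div_add_div _ _ (by positivity) (by positivity),
        div_eq_one_iff_eq (by positivity)]; ring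
  have key := ENNReal.lintegral_mul_le_Lp_mul_Lq P hpq
    (f := fun x => f x ^ (l / s₃)) (g := fun x => f x ^ ((1 - l) / s₃))
    ((hf.pow_const _).aemeasurable) ((hf.pow_const _).aemeasurable)
  have e1 : ∀ x, ((fun x => f x ^ (l / s₃)) * fun x => f x ^ ((1 - l) / s₃)) x
      = f x ^ s₃⁻¹ := by
    intro x
    simp only [Pi.mul_apply]
    rw [← ENNReal.rpow_add_of_nonneg _ _ (by positivity) (by positivity)]
    congr 1
    field_simp
    ring
  have e2 : ∀ x, (f x ^ (l / s₃)) ^ (s₃ / (l * s₁)) = f x ^ s₁⁻¹ := by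
    intro x
    rw [← ENNReal.rpow_mul]
    congr 1
    field_simp
  have e3 : ∀ x, (f x ^ ((1 - l) / s₃)) ^ (s₃ / ((1 - l) * s₂)) = f x ^ s₂⁻¹ := by
    intro x
    rw [← ENNReal.rpow_mul]
    congr 1
    field_simp
  have e4 : 1 / (s₃ / (l * s₁)) = l * s₁ / s₃ := by rw [one_div, inv_div]
  have e5 : 1 / (s₃ / ((1 - l) * s₂)) = (1 - l) * s₂ / s₃ := by rw [one_div, inv_div]
  calc ∫⁻ x, f x ^ s₃⁻¹ ∂P
      = ∫⁻ x, ((fun x => f x ^ (l / s₃)) * fun x => f x ^ ((1 - l) / s₃)) x ∂P := by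
        simp_rw [e1]
    _ ≤ _ := key
    _ = _ := by simp_rw [e2, e3, e4, e5]

/-- The Rényi integrand has lintegral at least 1. -/
lemma one_le_lintegral_rpow (P : Measure S) [IsProbabilityMeasure P]
    (Q : Measure S) [IsProbabilityMeasure Q] (hQP : Q ≪ P) {α : ℝ} (hα : 1 < α) :
    1 ≤ ∫⁻ x, Q.rnDeriv P x ^ α ∂P := by
  have hα0 : 0 < α := by linarith
  have hα1 : α - 1 ≠ 0 := by linarith
  have hpq : Real.HolderConjugate α (α / (α - 1)) := Real.holderConjugate_iff.2 ⟨hα, by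
    rw [inv_div]
    field_simp; ring⟩
  have hmeas := Measure.measurable_rnDeriv Q P
  have key := ENNReal.lintegral_mul_le_Lp_mul_Lq P hpq
    (f := Q.rnDeriv P) (g := fun _ => 1) hmeas.aemeasurable aemeasurable_const
  simp only [Pi.mul_apply, mul_one, ENNReal.one_rpow, lintegral_one, measure_univ,
    ENNReal.one_rpow] at key
  rw [Measure.lintegral_rnDeriv hQP, measure_univ] at key
  have := ENNReal.rpow_le_rpow key hα0.le
  rwa [ENNReal.one_rpow, ← ENNReal.rpow_mul, one_div, inv_mul_cancel₀ hα0.ne',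
    ENNReal.rpow_one] at this

/-- Convexity of the log-mgf, at a pair of points. -/
lemma log_mgf_convex (P : Measure S) [IsProbabilityMeasure P]
    (g : S → ℝ) (hg : Measurable g) {M : ℝ} (hM : ∀ x, |g x| ≤ M)
    {γ₁ γ₂ a : ℝ} (ha : 0 < a) (ha1 : a < 1) :
    Real.log (∫ x, Real.exp ((a * γ₁ + (1 - a) * γ₂) * g x) ∂P) ≤
      a * Real.log (∫ x, Real.exp (γ₁ * g x) ∂P)
        + (1 - a) * Real.log (∫ x, Real.exp (γ₂ * g x) ∂P) := by
  have ha1' : 0 < 1 - a := by linarith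
  have hmem : ∀ (c : ℝ) (p : ENNReal), MemLp (fun x => Real.exp (c * g x)) p P := by
    intro c p
    refine MemLp.of_bound ((hg.const_mul c).exp.aestronglyMeasurable)
      (Real.exp (|c| * M)) (Filter.Eventually.of_forall fun x => ?_)
    rw [Real.norm_eq_abs, abs_of_pos (Real.exp_pos _)]
    refine Real.exp_le_exp.2 ?_
    calc c * g x ≤ |c * g x| := le_abs_self _
      _ = |c| * |g x| := abs_mul _ _
      _ ≤ |c| * M := by
          refine mul_le_mul_of_nonneg_left (hM x) (abs_nonneg _)
  have hint : ∀ c : ℝ, Integrable (fun x => Real.exp (c * g x)) P := by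
    intro c
    exact memLp_one_iff_integrable.1 (hmem c 1)
  have hpos : ∀ c : ℝ, 0 < ∫ x, Real.exp (c * g x) ∂P := by
    intro c
    have hb : ∀ x, Real.exp (-(|c| * M)) ≤ Real.exp (c * g x) := by
      intro x
      refine Real.exp_le_exp.2 ?_
      calc -(|c| * M) ≤ -|c * g x| := by
            rw [neg_le_neg_iff, abs_mul]
            exact mul_le_mul_of_nonneg_left (hM x) (abs_nonneg _)
        _ ≤ c * g x := neg_abs_le _
    have h2 := integral_mono (integrable_const (Real.exp (-(|c| * M)))) (hint c) hb
    rw [integral_const, probReal_univ, smul_eq_mul, one_mul] at h2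
    exact lt_of_lt_of_le (Real.exp_pos _) h2
  have hpq : Real.HolderConjugate a⁻¹ (1 - a)⁻¹ :=
    Real.holderConjugate_iff.2 ⟨(one_lt_inv₀ ha).2 ha1, by rw [inv_inv, inv_inv]; ring⟩
  have key := integral_mul_le_Lp_mul_Lq_of_nonneg hpq
    (f := fun x => Real.exp (a * γ₁ * g x)) (g := fun x => Real.exp ((1 - a) * γ₂ * g x))
    (Filter.Eventually.of_forall fun x => (Real.exp_pos _).le)
    (Filter.Eventually.of_forall fun x => (Real.exp_pos _).le)
    (hmem _ _) (hmem _ _)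
  have e1 : ∀ x, Real.exp (a * γ₁ * g x) * Real.exp ((1 - a) * γ₂ * g x)
      = Real.exp ((a * γ₁ + (1 - a) * γ₂) * g x) := by
    intro x; rw [← Real.exp_add]; ring_nf
  have e2 : ∀ x, Real.exp (a * γ₁ * g x) ^ (a⁻¹ : ℝ) = Real.exp (γ₁ * g x) := by
    intro x; rw [← Real.exp_mul]; congr 1; field_simp
  have e3 : ∀ x, Real.exp ((1 - a) * γ₂ * g x) ^ ((1 - a)⁻¹ : ℝ) = Real.exp (γ₂ * g x) := by
    intro x; rw [← Real.exp_mul]; congr 1; field_simp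
  simp_rw [e1, e2, e3, one_div, inv_inv] at key
  calc Real.log (∫ x, Real.exp ((a * γ₁ + (1 - a) * γ₂) * g x) ∂P)
      ≤ Real.log ((∫ x, Real.exp (γ₁ * g x) ∂P) ^ a * (∫ x, Real.exp (γ₂ * g x) ∂P) ^ (1 - a)) :=
        Real.log_le_log (hpos _) key
    _ = _ := by
        rw [Real.log_mul (ne_of_gt (Real.rpow_pos_of_pos (hpos _) _))
          (ne_of_gt (Real.rpow_pos_of_pos (hpos _) _)), Real.log_rpow (hpos _),
          Real.log_rpow (hpos _)]

end Helpers

section Helpers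

variable {S : Type*} [MeasurableSpace S]


variable {S : Type*} [MeasurableSpace S]

lemma coef_eq {β t : ℝ} (hβ : 0 < β) (ht : 0 < t) (hs : 0 < 1 - β * t) :
    ((1 - β * t)⁻¹ * ((1 - β * t)⁻¹ - 1))⁻¹ = (1 - β * t) ^ 2 / (β * t) := by
  rw [show (1 - β * t)⁻¹ - 1 = (β * t) / (1 - β * t) by field_simp; ring]
  rw [show (1 - β * t)⁻¹ * ((β * t) / (1 - β * t)) = (β * t) / (1 - β * t) ^ 2 by
    field_simp]
  rw [inv_div]

end Helpers


/-- The Rényi divergence of degree `α` of `Q` with respect to `P`: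
`R_α(Q‖P) = (1/(α(α−1)))·log ∫ (dQ/dP)^α dP` if `Q ≪ P`, and `+∞` otherwise. -/
noncomputable def renyiDiv {S : Type*} [MeasurableSpace S] (α : ℝ)
    (Q P : Measure S) : EReal :=
  if Q ≪ P then
    (((α * (α - 1))⁻¹ : ℝ) : EReal) * ENNReal.log (∫⁻ x, Q.rnDeriv P x ^ α ∂P)
  else ⊤

/-- Convexity of the robust risk-sensitive bound: the function
`h(γ) = f(γ/(γ−β))/(γ−β) + (1/γ)·log ∫ e^{γg} dP` (with
`f(α) = sup_{Q ∈ 𝒬} R_α(Q‖P)`) is convex as a function of `1/γ` on `(0, 1/β)`. -/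
theorem robust_bound_convex_in_inverse {S : Type*} [MeasurableSpace S]
    (P : Measure S) [IsProbabilityMeasure P]
    (𝒬 : Set (Measure S)) (h𝒬 : 𝒬.Nonempty) (hprob : ∀ Q ∈ 𝒬, IsProbabilityMeasure Q)
    (habs : ∀ Q ∈ 𝒬, Q ≪ P)
    (g : S → ℝ) (hg : Measurable g) (hbd : ∃ M : ℝ, ∀ x, |g x| ≤ M)
    (β : ℝ) (hβ : 0 < β) (h : ℝ → EReal)
    (hdef : ∀ γ : ℝ, h γ =
      (((γ - β)⁻¹ : ℝ) : EReal) * (⨆ Q ∈ 𝒬, renyiDiv (γ / (γ - β)) Q P)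
        + ((γ⁻¹ * Real.log (∫ x, Real.exp (γ * g x) ∂P) : ℝ) : EReal)) :
    ∀ t₁ ∈ Set.Ioo (0 : ℝ) β⁻¹, ∀ t₂ ∈ Set.Ioo (0 : ℝ) β⁻¹, ∀ l ∈ Set.Ioo (0 : ℝ) 1,
      h (l * t₁ + (1 - l) * t₂)⁻¹ ≤
        ((l : ℝ) : EReal) * h t₁⁻¹ + ((1 - l : ℝ) : EReal) * h t₂⁻¹ := by

  obtain ⟨M, hM⟩ := hbd
  rintro t₁ ⟨ht₁0, ht₁β⟩ t₂ ⟨ht₂0, ht₂β⟩ l ⟨hl0, hl1⟩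
  have hl1' : 0 < 1 - l := by linarith
  set t₃ := l * t₁ + (1 - l) * t₂ with ht₃def
  have ht₃0 : 0 < t₃ := by positivity
  have ht₃β : t₃ < β⁻¹ := by
    have : l * t₁ + (1 - l) * t₂ < l * β⁻¹ + (1 - l) * β⁻¹ := by
      gcongr <;> assumption
    rw [ht₃def]; linarith
  have hsgen : ∀ t : ℝ, t < β⁻¹ → 0 < 1 - β * t := by
    intro t htβ
    have h2 := (mul_lt_mul_of_pos_left htβ hβ)
    rw [mul_inv_cancel₀ hβ.ne'] at h2
    linarith
  have hs₁ : 0 < 1 - β * t₁ := hsgen _ ht₁β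
  have hs₂ : 0 < 1 - β * t₂ := hsgen _ ht₂β
  have hs₃ : 0 < 1 - β * t₃ := hsgen _ ht₃β
  have hs₁1 : 1 - β * t₁ < 1 := by nlinarith
  have hs₂1 : 1 - β * t₂ < 1 := by nlinarith
  have hs₃1 : 1 - β * t₃ < 1 := by nlinarith
  -- rewrite h at the three points
  have key : ∀ t : ℝ, 0 < t → 0 < 1 - β * t →
      h t⁻¹ = (((t / (1 - β * t)) : ℝ) : EReal) * (⨆ Q ∈ 𝒬, renyiDiv ((1 - β * t)⁻¹) Q P)
        + ((t * Real.log (∫ x, Real.exp (t⁻¹ * g x) ∂P) : ℝ) : EReal) := by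
    intro t ht hst
    rw [hdef]
    have h1 : t⁻¹ - β = (1 - β * t) / t := by field_simp
    have h2 : (t⁻¹ - β)⁻¹ = t / (1 - β * t) := by rw [h1, inv_div]
    have h3 : t⁻¹ / (t⁻¹ - β) = (1 - β * t)⁻¹ := by
      rw [div_eq_mul_inv, h2]
      field_simp
    rw [h2, h3, inv_inv]
  rw [key t₁ ht₁0 hs₁, key t₂ ht₂0 hs₂, key t₃ ht₃0 hs₃]
  -- basic facts about the Rényi divergences
  have hren : ∀ (s : ℝ), ∀ Q ∈ 𝒬, renyiDiv s⁻¹ Q P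
      = (((s⁻¹ * (s⁻¹ - 1))⁻¹ : ℝ) : EReal)
          * ENNReal.log (∫⁻ x, Q.rnDeriv P x ^ (s⁻¹ : ℝ) ∂P) := by
    intro s Q hQ
    rw [renyiDiv, if_pos (habs Q hQ)]
  have hK0 : ∀ Q ∈ 𝒬, ∀ s : ℝ, 0 < s → s < 1 →
      (0 : EReal) ≤ ENNReal.log (∫⁻ x, Q.rnDeriv P x ^ (s⁻¹ : ℝ) ∂P) := by
    intro Q hQ s hs hs1
    haveI := hprob Q hQ
    rw [ENNReal.zero_le_log_iff]
    exact one_le_lintegral_rpow P Q (habs Q hQ) ((one_lt_inv₀ hs).2 hs1)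
  have hd0 : ∀ s : ℝ, 0 < s → s < 1 → 0 ≤ ((s⁻¹ * (s⁻¹ - 1))⁻¹ : ℝ) := by
    intro s hs hs1
    have h2 : (1:ℝ) < s⁻¹ := (one_lt_inv₀ hs).2 hs1
    have h3 : (0:ℝ) < s⁻¹ - 1 := by linarith
    positivity
  have hrge0 : ∀ s : ℝ, 0 < s → s < 1 → ∀ Q ∈ 𝒬, (0:EReal) ≤ renyiDiv s⁻¹ Q P := by
    intro s hs hs1 Q hQ
    rw [hren s Q hQ]
    exact mul_nonneg (by exact_mod_cast hd0 s hs hs1) (hK0 Q hQ s hs hs1)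
  have hSnn : ∀ s : ℝ, 0 < s → s < 1 → (0:EReal) ≤ ⨆ Q ∈ 𝒬, renyiDiv s⁻¹ Q P := by
    intro s hs hs1
    obtain ⟨Q₀, hQ₀⟩ := h𝒬
    exact le_trans (hrge0 s hs hs1 Q₀ hQ₀)
      (le_iSup₂ (f := fun Q (_ : Q ∈ 𝒬) => renyiDiv s⁻¹ Q P) Q₀ hQ₀)
  have hS₁0 : (0:EReal) ≤ ⨆ Q ∈ 𝒬, renyiDiv ((1 - β * t₁)⁻¹) Q P := hSnn _ hs₁ hs₁1
  have hS₂0 : (0:EReal) ≤ ⨆ Q ∈ 𝒬, renyiDiv ((1 - β * t₂)⁻¹) Q P := hSnn _ hs₂ hs₂1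
  -- the per-Q convexity inequality
  have hcore : ∀ Q ∈ 𝒬,
      ((t₃ / (1 - β * t₃) : ℝ) : EReal) * renyiDiv ((1 - β * t₃)⁻¹) Q P ≤
        ((l * (t₁ / (1 - β * t₁)) : ℝ) : EReal) * renyiDiv ((1 - β * t₁)⁻¹) Q P
          + (((1 - l) * (t₂ / (1 - β * t₂)) : ℝ) : EReal)
              * renyiDiv ((1 - β * t₂)⁻¹) Q P := by
    intro Q hQ
    haveI := hprob Q hQ
    have hf := Measure.measurable_rnDeriv Q P
    have hHolder := lintegral_rpow_inv_holder P (Q.rnDeriv P) hf hs₁ hs₂ hl0 hl1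
    rw [show l * (1 - β * t₁) + (1 - l) * (1 - β * t₂) = 1 - β * t₃ by
      rw [ht₃def]; ring] at hHolder
    have hlog := ENNReal.log_monotone hHolder
    rw [ENNReal.log_mul_add, ENNReal.log_rpow, ENNReal.log_rpow] at hlog
    rw [hren (1 - β * t₁) Q hQ, hren (1 - β * t₂) Q hQ, hren (1 - β * t₃) Q hQ,
      scal_aux, scal_aux, scal_aux]
    have hK₁0 := hK0 Q hQ _ hs₁ hs₁1
    have hK₂0 := hK0 Q hQ _ hs₂ hs₂1
    have ha₁0 : (0:ℝ) ≤ l * (1 - β * t₁) / (1 - β * t₃) := by positivity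
    have ha₂0 : (0:ℝ) ≤ (1 - l) * (1 - β * t₂) / (1 - β * t₃) := by positivity
    have hc₃d₃0 : (0:ℝ) ≤ t₃ / (1 - β * t₃) * ((1 - β * t₃)⁻¹ * ((1 - β * t₃)⁻¹ - 1))⁻¹ :=
      mul_nonneg (by positivity) (hd0 _ hs₃ hs₃1)
    calc ((t₃ / (1 - β * t₃) * ((1 - β * t₃)⁻¹ * ((1 - β * t₃)⁻¹ - 1))⁻¹ : ℝ) : EReal)
          * ENNReal.log (∫⁻ x, Q.rnDeriv P x ^ ((1 - β * t₃)⁻¹ : ℝ) ∂P)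
        ≤ ((t₃ / (1 - β * t₃) * ((1 - β * t₃)⁻¹ * ((1 - β * t₃)⁻¹ - 1))⁻¹ : ℝ) : EReal)
            * (((l * (1 - β * t₁) / (1 - β * t₃) : ℝ) : EReal)
                * ENNReal.log (∫⁻ x, Q.rnDeriv P x ^ ((1 - β * t₁)⁻¹ : ℝ) ∂P)
              + (((1 - l) * (1 - β * t₂) / (1 - β * t₃) : ℝ) : EReal)
                * ENNReal.log (∫⁻ x, Q.rnDeriv P x ^ ((1 - β * t₂)⁻¹ : ℝ) ∂P)) := by
          exact mul_le_mul_of_nonneg_left hlog (by exact_mod_cast hc₃d₃0)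
      _ = _ := by
          rw [EReal.left_distrib_of_nonneg
              (mul_nonneg (by exact_mod_cast ha₁0) hK₁0)
              (mul_nonneg (by exact_mod_cast ha₂0) hK₂0),
            scal_aux, scal_aux]
          congr 2
          · rw [coef_eq hβ ht₃0 hs₃, coef_eq hβ ht₁0 hs₁]
            congr 1
            generalize 1 - β * t₃ = u at hs₃ ⊢
            generalize 1 - β * t₁ = v at hs₁ ⊢
            field_simp
          · rw [coef_eq hβ ht₃0 hs₃, coef_eq hβ ht₂0 hs₂]
            congr 1
            generalize 1 - β * t₃ = u at hs₃ ⊢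
            generalize 1 - β * t₂ = v at hs₂ ⊢
            field_simp
  -- convexity of the log-mgf part
  have hψ : t₃ * Real.log (∫ x, Real.exp (t₃⁻¹ * g x) ∂P) ≤
      l * (t₁ * Real.log (∫ x, Real.exp (t₁⁻¹ * g x) ∂P))
        + (1 - l) * (t₂ * Real.log (∫ x, Real.exp (t₂⁻¹ * g x) ∂P)) := by
    set a := l * t₁ / t₃ with hadef
    have ha0 : 0 < a := by positivity
    have ha1 : a < 1 := by
      rw [hadef, div_lt_one ht₃0, ht₃def]
      nlinarith
    have hcomb : a * t₁⁻¹ + (1 - a) * t₂⁻¹ = t₃⁻¹ := by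
      rw [hadef]
      field_simp
      ring
    have key2 := log_mgf_convex P g hg hM ha0 ha1 (γ₁ := t₁⁻¹) (γ₂ := t₂⁻¹)
    rw [hcomb] at key2
    have key3 := mul_le_mul_of_nonneg_left key2 ht₃0.le
    have e₁ : t₃ * a = l * t₁ := by rw [hadef]; field_simp
    have e₂ : t₃ * (1 - a) = (1 - l) * t₂ := by rw [hadef]; field_simp; ring
    calc t₃ * Real.log (∫ x, Real.exp (t₃⁻¹ * g x) ∂P)
        ≤ t₃ * (a * Real.log (∫ x, Real.exp (t₁⁻¹ * g x) ∂P)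
            + (1 - a) * Real.log (∫ x, Real.exp (t₂⁻¹ * g x) ∂P)) := key3
      _ = _ := by rw [mul_add, ← mul_assoc, ← mul_assoc, e₁, e₂, mul_assoc, mul_assoc]
  -- case split on finiteness of the suprema
  by_cases hS₁top : (⨆ Q ∈ 𝒬, renyiDiv ((1 - β * t₁)⁻¹) Q P) = ⊤
  · rw [hS₁top, EReal.coe_mul_top_of_pos (by positivity),
      EReal.top_add_of_ne_bot (EReal.coe_ne_bot _),
      EReal.coe_mul_top_of_pos hl0, EReal.top_add_of_ne_bot]
    · exact le_top
    · have h1 : ((((1 - l) * (t₂ * Real.log (∫ x, Real.exp (t₂⁻¹ * g x) ∂P)) : ℝ)) : EReal)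
          ≤ ((1 - l : ℝ) : EReal) * (((t₂ / (1 - β * t₂) : ℝ) : EReal)
              * (⨆ Q ∈ 𝒬, renyiDiv ((1 - β * t₂)⁻¹) Q P)
            + ((t₂ * Real.log (∫ x, Real.exp (t₂⁻¹ * g x) ∂P) : ℝ) : EReal)) := by
        rw [EReal.coe_mul]
        refine mul_le_mul_of_nonneg_left ?_ (by exact_mod_cast hl1'.le)
        exact le_add_of_nonneg_left (mul_nonneg (by
          exact_mod_cast div_nonneg ht₂0.le hs₂.le) hS₂0)
      exact (lt_of_lt_of_le (EReal.bot_lt_coe _) h1).ne'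
  by_cases hS₂top : (⨆ Q ∈ 𝒬, renyiDiv ((1 - β * t₂)⁻¹) Q P) = ⊤
  · rw [hS₂top, EReal.coe_mul_top_of_pos (by positivity),
      EReal.top_add_of_ne_bot (EReal.coe_ne_bot _),
      EReal.coe_mul_top_of_pos hl1', EReal.add_top_of_ne_bot]
    · exact le_top
    · have h1 : (((l * (t₁ * Real.log (∫ x, Real.exp (t₁⁻¹ * g x) ∂P)) : ℝ)) : EReal)
          ≤ ((l : ℝ) : EReal) * (((t₁ / (1 - β * t₁) : ℝ) : EReal)
              * (⨆ Q ∈ 𝒬, renyiDiv ((1 - β * t₁)⁻¹) Q P)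
            + ((t₁ * Real.log (∫ x, Real.exp (t₁⁻¹ * g x) ∂P) : ℝ) : EReal)) := by
        rw [EReal.coe_mul]
        refine mul_le_mul_of_nonneg_left ?_ (by exact_mod_cast hl0.le)
        exact le_add_of_nonneg_left (mul_nonneg (by
          exact_mod_cast div_nonneg ht₁0.le hs₁.le) hS₁0)
      exact (lt_of_lt_of_le (EReal.bot_lt_coe _) h1).ne'
  -- both suprema finite
  have hS₁bot : (⨆ Q ∈ 𝒬, renyiDiv ((1 - β * t₁)⁻¹) Q P) ≠ ⊥ := by
    intro hb
    rw [hb] at hS₁0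
    simp at hS₁0
  have hS₂bot : (⨆ Q ∈ 𝒬, renyiDiv ((1 - β * t₂)⁻¹) Q P) ≠ ⊥ := by
    intro hb
    rw [hb] at hS₂0
    simp at hS₂0
  obtain ⟨r₁, hr₁⟩ : ∃ r : ℝ, (⨆ Q ∈ 𝒬, renyiDiv ((1 - β * t₁)⁻¹) Q P) = (r : EReal) :=
    ⟨_, (EReal.coe_toReal hS₁top hS₁bot).symm⟩
  obtain ⟨r₂, hr₂⟩ : ∃ r : ℝ, (⨆ Q ∈ 𝒬, renyiDiv ((1 - β * t₂)⁻¹) Q P) = (r : EReal) :=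
    ⟨_, (EReal.coe_toReal hS₂top hS₂bot).symm⟩
  rw [hr₁, hr₂]
  set b := l * (t₁ / (1 - β * t₁)) * r₁ + (1 - l) * (t₂ / (1 - β * t₂)) * r₂ with hbdef
  have hQb : ∀ Q ∈ 𝒬,
      ((t₃ / (1 - β * t₃) : ℝ) : EReal) * renyiDiv ((1 - β * t₃)⁻¹) Q P ≤ ((b : ℝ) : EReal) := by
    intro Q hQ
    refine le_trans (hcore Q hQ) ?_
    have hb₁ : renyiDiv ((1 - β * t₁)⁻¹) Q P ≤ ((r₁ : ℝ) : EReal) := by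
      rw [← hr₁]
      exact le_iSup₂ (f := fun Q (_ : Q ∈ 𝒬) => renyiDiv ((1 - β * t₁)⁻¹) Q P) Q hQ
    have hb₂ : renyiDiv ((1 - β * t₂)⁻¹) Q P ≤ ((r₂ : ℝ) : EReal) := by
      rw [← hr₂]
      exact le_iSup₂ (f := fun Q (_ : Q ∈ 𝒬) => renyiDiv ((1 - β * t₂)⁻¹) Q P) Q hQ
    calc ((l * (t₁ / (1 - β * t₁)) : ℝ) : EReal) * renyiDiv ((1 - β * t₁)⁻¹) Q P
          + (((1 - l) * (t₂ / (1 - β * t₂)) : ℝ) : EReal) * renyiDiv ((1 - β * t₂)⁻¹) Q P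
        ≤ ((l * (t₁ / (1 - β * t₁)) : ℝ) : EReal) * ((r₁ : ℝ) : EReal)
          + (((1 - l) * (t₂ / (1 - β * t₂)) : ℝ) : EReal) * ((r₂ : ℝ) : EReal) :=
          add_le_add (mul_le_mul_of_nonneg_left hb₁ (EReal.coe_nonneg.2
              (mul_nonneg hl0.le (div_nonneg ht₁0.le hs₁.le))))
            (mul_le_mul_of_nonneg_left hb₂ (EReal.coe_nonneg.2
              (mul_nonneg hl1'.le (div_nonneg ht₂0.le hs₂.le))))
      _ = ((b : ℝ) : EReal) := by
          rw [← EReal.coe_mul, ← EReal.coe_mul, ← EReal.coe_add]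
  have hc₃pos : (0 : EReal) < ((t₃ / (1 - β * t₃) : ℝ) : EReal) := by
    exact_mod_cast div_pos ht₃0 hs₃
  have hS₃b : (⨆ Q ∈ 𝒬, renyiDiv ((1 - β * t₃)⁻¹) Q P)
      ≤ ((b : ℝ) : EReal) / ((t₃ / (1 - β * t₃) : ℝ) : EReal) := by
    refine iSup₂_le fun Q hQ => ?_
    rw [EReal.le_div_iff_mul_le hc₃pos (EReal.coe_ne_top _)]
    rw [EReal.mul_comm]
    exact hQb Q hQ
  have hfin : ((t₃ / (1 - β * t₃) : ℝ) : EReal) * (⨆ Q ∈ 𝒬, renyiDiv ((1 - β * t₃)⁻¹) Q P)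
      ≤ ((b : ℝ) : EReal) := by
    refine le_trans (mul_le_mul_of_nonneg_left hS₃b hc₃pos.le) ?_
    rw [EReal.mul_div_cancel (EReal.coe_ne_bot _) (EReal.coe_ne_top _) hc₃pos.ne']
  calc ((t₃ / (1 - β * t₃) : ℝ) : EReal) * (⨆ Q ∈ 𝒬, renyiDiv ((1 - β * t₃)⁻¹) Q P)
        + ((t₃ * Real.log (∫ x, Real.exp (t₃⁻¹ * g x) ∂P) : ℝ) : EReal)
      ≤ ((b : ℝ) : EReal) + ((t₃ * Real.log (∫ x, Real.exp (t₃⁻¹ * g x) ∂P) : ℝ) : EReal) :=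
        add_le_add_left hfin _
    _ ≤ ((b : ℝ) : EReal) + ((l * (t₁ * Real.log (∫ x, Real.exp (t₁⁻¹ * g x) ∂P))
          + (1 - l) * (t₂ * Real.log (∫ x, Real.exp (t₂⁻¹ * g x) ∂P)) : ℝ) : EReal) :=
        add_le_add_right (EReal.coe_le_coe_iff.2 hψ) _
    _ = _ := by
        rw [← EReal.coe_add, hbdef]
        rw [show l * (t₁ / (1 - β * t₁)) * r₁ + (1 - l) * (t₂ / (1 - β * t₂)) * r₂
            + (l * (t₁ * Real.log (∫ x, Real.exp (t₁⁻¹ * g x) ∂P))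
              + (1 - l) * (t₂ * Real.log (∫ x, Real.exp (t₂⁻¹ * g x) ∂P)))
          = l * (t₁ / (1 - β * t₁) * r₁ + t₁ * Real.log (∫ x, Real.exp (t₁⁻¹ * g x) ∂P))
            + (1 - l) * (t₂ / (1 - β * t₂) * r₂
              + t₂ * Real.log (∫ x, Real.exp (t₂⁻¹ * g x) ∂P)) from by ring]
        norm_cast
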